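/- Let α₀ = {(i,j) ∈ Δ : i < j}. The group homomorphism St_n(R)_{α₀} → GL_n(R) sending each generator x_ij(r) to the elementary matrix ε_ij(r) is injective, and its image is T_n(R), the group of upper unitriangular n×n matrices over R (1's on the diagonal, 0's below the diagonal). Hence St_n(R)_{α₀} ≅ T_n(R): the unitriangular group is presented by the generators x_ij(r) (i < j, r ∈ R) subject to the Steinberg relations. -/

import Mathlib

/-- The elementary matrix `ε_{ij}(r)`. -/
def elemMat {n : ℕ} {R : Type*} [Ring R] (i j : Fin n) (r : R) :
    Matrix (Fin n) (Fin n) R :=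
  1 + Matrix.single i j r

/-- The elementary matrix `ε_{ij}(r)` as a unit (invertible matrix) for `i ≠ j`. -/
def elemUnit {n : ℕ} {R : Type*} [Ring R] (i j : Fin n) (hij : i ≠ j) (r : R) :
    (Matrix (Fin n) (Fin n) R)ˣ where
  val := elemMat i j r
  inv := elemMat i j (-r)
  val_inv := by
    have h0 : Matrix.single i j r * Matrix.single i j (-r) = 0 :=
      Matrix.single_mul_single_of_ne (h := hij.symm) ..
    simp [elemMat, mul_add, add_mul, h0, ← Matrix.single_add, add_assoc]
  inv_val := by
    have h0 : Matrix.single i j (-r) * Matrix.single i j r = 0 :=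
      Matrix.single_mul_single_of_ne (h := hij.symm) ..
    simp [elemMat, mul_add, add_mul, h0, ← Matrix.single_add, add_assoc]

open scoped commutatorElement

/-- The Steinberg relations on the generators `x_{ij}(r)`, `(i,j) ∈ α`, `r ∈ R`:
`St1 : x_{ij}(a) x_{ij}(b) = x_{ij}(a+b)`;
`St2 : ⁅x_{ij}(a), x_{kl}(b)⁆ = 1` if `j ≠ k`, `i ≠ l`, and
`⁅x_{ij}(a), x_{jl}(b)⁆ = x_{il}(ab)` if `i ≠ l`.
The hypothesis `hc` guarantees that the position `(i,l)` appearing in the last relation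
again belongs to `α`. -/
def stRels (n : ℕ) (R : Type*) [Ring R] (α : Set (Fin n × Fin n))
    (hc : ∀ i j k : Fin n, (i, j) ∈ α → (j, k) ∈ α → i ≠ k → (i, k) ∈ α) :
    Set (FreeGroup ({p : Fin n × Fin n // p ∈ α} × R)) :=
  {w | ∃ (p : {p : Fin n × Fin n // p ∈ α}) (a b : R),
      w = FreeGroup.of (p, a) * FreeGroup.of (p, b) * (FreeGroup.of (p, a + b))⁻¹} ∪
  {w | ∃ (p q : {p : Fin n × Fin n // p ∈ α}) (a b : R),
      p.1.2 ≠ q.1.1 ∧ p.1.1 ≠ q.1.2 ∧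
      w = ⁅FreeGroup.of (p, a), FreeGroup.of (q, b)⁆} ∪
  {w | ∃ (p q : {p : Fin n × Fin n // p ∈ α}) (a b : R) (h : p.1.2 = q.1.1)
      (hil : p.1.1 ≠ q.1.2),
      w = ⁅FreeGroup.of (p, a), FreeGroup.of (q, b)⁆ *
        (FreeGroup.of
          (⟨(p.1.1, q.1.2), hc p.1.1 p.1.2 q.1.2 p.2 (by rw [h]; exact q.2) hil⟩, a * b))⁻¹}

/-- The set `α₀ = {(i,j) : i < j}` of strictly upper triangular positions. -/
def ltSet (n : ℕ) : Set (Fin n × Fin n) := {p | p.1 < p.2}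

/-- `St_n(R)_{α₀}`: the group presented by generators `x_{ij}(r)` with `i < j` subject to the
Steinberg relations. -/
abbrev SteinbergUpper (n : ℕ) (R : Type*) [Ring R] :=
  PresentedGroup (stRels n R (ltSet n) (fun i j k hij hjk _ => show (i, k) ∈ ltSet n from lt_trans (show i < j from hij) (show j < k from hjk)))

namespace SteinbergAux

variable {n : ℕ} {R : Type*} [Ring R]

/-- abbreviation for the relation set of `SteinbergUpper`. -/
abbrev upperRels (n : ℕ) (R : Type*) [Ring R] :
    Set (FreeGroup ({p : Fin n × Fin n // p ∈ ltSet n} × R)) :=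
  stRels n R (ltSet n) (fun i j k hij hjk _ => show (i, k) ∈ ltSet n from
    lt_trans (show i < j from hij) (show j < k from hjk))

/-- the generator `x_{ij}(r)`. -/
def X (i j : Fin n) (h : (i, j) ∈ ltSet n) (r : R) : SteinbergUpper n R :=
  PresentedGroup.of (⟨(i, j), h⟩, r)

lemma mk_rel {w : FreeGroup ({p : Fin n × Fin n // p ∈ ltSet n} × R)}
    (hw : w ∈ upperRels n R) : PresentedGroup.mk (upperRels n R) w = 1 :=
  (QuotientGroup.eq_one_iff _).2 (Subgroup.subset_normalClosure hw)

lemma rel1 (i j : Fin n) (h : (i, j) ∈ ltSet n) (a b : R) :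
    X i j h a * X i j h b = X i j h (a + b) := by
  have := mk_rel (n := n) (R := R) (Or.inl (Or.inl ⟨⟨(i, j), h⟩, a, b, rfl⟩))
  rw [map_mul, map_mul, map_inv, mul_inv_eq_one] at this
  exact this

lemma rel2 {i j k l : Fin n} (hij : (i, j) ∈ ltSet n) (hkl : (k, l) ∈ ltSet n)
    (h1 : j ≠ k) (h2 : i ≠ l) (a b : R) :
    Commute (X i j hij a) (X k l hkl b) := by
  have := mk_rel (n := n) (R := R)
    (Or.inl (Or.inr ⟨⟨(i, j), hij⟩, ⟨(k, l), hkl⟩, a, b, h1, h2, rfl⟩))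
  rw [map_commutatorElement] at this
  exact commutatorElement_eq_one_iff_commute.mp this

lemma rel3 {i j l : Fin n} (hij : (i, j) ∈ ltSet n) (hjl : (j, l) ∈ ltSet n)
    (hil : (i, l) ∈ ltSet n) (a b : R) :
    ⁅X i j hij a, X j l hjl b⁆ = X i l hil (a * b) := by
  have hne : i ≠ l := ne_of_lt hil
  have := mk_rel (n := n) (R := R)
    (Or.inr ⟨⟨(i, j), hij⟩, ⟨(j, l), hjl⟩, a, b, rfl, hne, rfl⟩)
  rw [map_mul, map_inv, mul_inv_eq_one, map_commutatorElement] at this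
  exact this

lemma X_zero (i j : Fin n) (h : (i, j) ∈ ltSet n) : X i j h (0 : R) = 1 := by
  have := rel1 i j h (0 : R) 0
  rw [add_zero] at this
  exact mul_eq_left.mp this

lemma X_inv (i j : Fin n) (h : (i, j) ∈ ltSet n) (a : R) :
    (X i j h a)⁻¹ = X i j h (-a) := by
  exact inv_eq_of_mul_eq_one_right (by rw [rel1, add_neg_cancel, X_zero])


section MatrixRels

open Matrix

lemma elemMat_mul (i j k l : Fin n) (a b : R) :
    elemMat i j a * elemMat k l b =
      1 + single i j a + single k l b +
        single i j a * single k l b := by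
  simp only [elemMat, add_mul, mul_add, one_mul, mul_one]
  abel

lemma eRel1 (i j : Fin n) (h : i ≠ j) (a b : R) :
    elemUnit i j h a * elemUnit i j h b = elemUnit i j h (a + b) := by
  ext1
  show elemMat i j a * elemMat i j b = elemMat i j (a + b)
  rw [elemMat_mul, single_mul_single_of_ne _ _ _ _ h.symm, elemMat, single_add]
  abel

lemma eRel2 {i j k l : Fin n} (hij : i ≠ j) (hkl : k ≠ l) (h1 : j ≠ k) (h2 : i ≠ l)
    (a b : R) : Commute (elemUnit i j hij a) (elemUnit k l hkl b) := by
  have : elemUnit i j hij a * elemUnit k l hkl b = elemUnit k l hkl b * elemUnit i j hij a := by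
    ext1
    show elemMat i j a * elemMat k l b = elemMat k l b * elemMat i j a
    rw [elemMat_mul, elemMat_mul, single_mul_single_of_ne _ _ _ _ h1,
      single_mul_single_of_ne _ _ _ _ (Ne.symm h2)]
    abel
  exact this

lemma eRel3 {i j l : Fin n} (hij : i ≠ j) (hjl : j ≠ l) (hil : i ≠ l) (a b : R) :
    ⁅elemUnit i j hij a, elemUnit j l hjl b⁆ = elemUnit i l hil (a * b) := by
  have z1 : single j l b * single i j a = 0 :=
    single_mul_single_of_ne _ _ _ _ (Ne.symm hil) _
  have z2 : single i l (a * b) * single j l b = 0 :=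
    single_mul_single_of_ne _ _ _ _ (Ne.symm hjl) _
  have z3 : single i l (a * b) * single i j a = 0 :=
    single_mul_single_of_ne _ _ _ _ (Ne.symm hil) _
  have key : elemUnit i j hij a * elemUnit j l hjl b =
      elemUnit i l hil (a * b) * (elemUnit j l hjl b * elemUnit i j hij a) := by
    ext1
    show elemMat i j a * elemMat j l b = elemMat i l (a*b) * (elemMat j l b * elemMat i j a)
    simp only [elemMat, add_mul, mul_add, one_mul, mul_one, z1, z2, z3, mul_zero, add_zero,
      single_mul_single_same]
    abel
  rw [commutatorElement_def, key]
  group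

/-- the target function on generators. -/
def F (n : ℕ) (R : Type*) [Ring R] : ({p : Fin n × Fin n // p ∈ ltSet n} × R) →
    (Matrix (Fin n) (Fin n) R)ˣ :=
  fun g => elemUnit g.1.1.1 g.1.1.2 (ne_of_lt g.1.2) g.2

lemma F_rels : ∀ r ∈ upperRels n R, FreeGroup.lift (F n R) r = 1 := by
  rintro r ((⟨p, a, b, rfl⟩ | ⟨p, q, a, b, h1, h2, rfl⟩) |
    ⟨⟨⟨i, j⟩, hij⟩, ⟨⟨k, l⟩, hkl⟩, a, b, h1, h2, rfl⟩)
  · simp only [_root_.map_mul, map_inv, FreeGroup.lift_apply_of, mul_inv_eq_one]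
    exact eRel1 _ _ _ a b
  · rw [map_commutatorElement]
    simp only [FreeGroup.lift_apply_of]
    exact commutatorElement_eq_one_iff_commute.mpr
      (eRel2 (ne_of_lt p.2) (ne_of_lt q.2) h1 h2 a b)
  · simp only at h1 h2
    subst h1
    rw [_root_.map_mul, map_inv, mul_inv_eq_one, map_commutatorElement]
    simp only [FreeGroup.lift_apply_of]
    exact eRel3 (ne_of_lt hij) (ne_of_lt hkl) h2 a b

/-- the homomorphism `St → GL`. -/
def phi : SteinbergUpper n R →* (Matrix (Fin n) (Fin n) R)ˣ :=
  PresentedGroup.toGroup F_rels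

lemma phi_X (i j : Fin n) (h : (i, j) ∈ ltSet n) (r : R) :
    phi (X i j h r) = elemUnit i j (ne_of_lt h) r :=
  PresentedGroup.toGroup.of F_rels

end MatrixRels


section NormalForm

/-- product of the generators in column `j`, rows from the list `L`. -/
def colL (f : Fin n → Fin n → R) (j : Fin n) (L : List (Fin n)) : SteinbergUpper n R :=
  (L.map fun i => if h : i < j then X i j h (f i j) else 1).prod

lemma colL_nil (f : Fin n → Fin n → R) (j : Fin n) : colL f j [] = 1 := rfl

lemma colL_cons (f : Fin n → Fin n → R) (j i : Fin n) (L : List (Fin n)) :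
    colL f j (i :: L) = (if h : i < j then X i j h (f i j) else 1) * colL f j L := by
  simp [colL]

lemma colL_append (f : Fin n → Fin n → R) (j : Fin n) (L₁ L₂ : List (Fin n)) :
    colL f j (L₁ ++ L₂) = colL f j L₁ * colL f j L₂ := by
  simp [colL]

lemma colL_congr {f g : Fin n → Fin n → R} {j : Fin n} {L : List (Fin n)}
    (h : ∀ i ∈ L, i < j → f i j = g i j) : colL f j L = colL g j L := by
  induction L with
  | nil => rfl
  | cons i L ih =>
    rw [colL_cons, colL_cons, ih (fun i hi => h i (List.mem_cons_of_mem _ hi))]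
    congr 1
    by_cases hij : i < j
    · rw [dif_pos hij, dif_pos hij, h i (List.mem_cons_self) hij]
    · rw [dif_neg hij, dif_neg hij]

lemma commute_colL {x : SteinbergUpper n R} {f : Fin n → Fin n → R} {j : Fin n}
    {L : List (Fin n)}
    (h : ∀ i ∈ L, ∀ (hij : (i, j) ∈ ltSet n), Commute x (X i j hij (f i j))) :
    Commute x (colL f j L) := by
  induction L with
  | nil => exact Commute.one_right x
  | cons i L ih =>
    rw [colL_cons]
    refine Commute.mul_right ?_ (ih fun i hi => h i (List.mem_cons_of_mem _ hi))
    by_cases hij : i < j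
    · rw [dif_pos hij]; exact h i (List.mem_cons_self) hij
    · rw [dif_neg hij]; exact Commute.one_right x

lemma colL_zero (j : Fin n) (L : List (Fin n)) :
    colL (fun _ _ => (0 : R)) j L = 1 := by
  induction L with
  | nil => rfl
  | cons i L ih =>
    rw [colL_cons, ih, mul_one]
    by_cases hij : i < j
    · rw [dif_pos hij]; exact X_zero i j hij
    · rw [dif_neg hij]

/-- splitting a sorted list at an element. -/
lemma sorted_split {l : List (Fin n)} (hp : l.Pairwise (· < ·)) {a : Fin n} (ha : a ∈ l) :
    ∃ s t : List (Fin n), l = s ++ a :: t ∧ (∀ x ∈ s, x < a) ∧ (∀ x ∈ t, a < x) ∧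
      t.Pairwise (· < ·) := by
  obtain ⟨s, t, rfl⟩ := List.append_of_mem ha
  rw [List.pairwise_append] at hp
  obtain ⟨hs, ht, hst⟩ := hp
  rw [List.pairwise_cons] at ht
  exact ⟨s, t, rfl, fun x hx => hst x hx a (List.mem_cons_self), ht.1, ht.2⟩

lemma split_one (k : Fin n) : ∃ L₁ L₂ : List (Fin n),
    List.finRange n = L₁ ++ k :: L₂ ∧ (∀ x ∈ L₁, x < k) ∧ (∀ x ∈ L₂, k < x) := by
  obtain ⟨s, t, h1, h2, h3, _⟩ := sorted_split (List.pairwise_lt_finRange n)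
    (List.mem_finRange k)
  exact ⟨s, t, h1, h2, h3⟩

lemma split_two {k l : Fin n} (hkl : k < l) : ∃ A B C : List (Fin n),
    List.finRange n = A ++ k :: (B ++ l :: C) ∧
      (∀ x ∈ A, x ≠ k ∧ x ≠ l) ∧ (∀ x ∈ B, x ≠ k ∧ x ≠ l) ∧ (∀ x ∈ C, x ≠ k ∧ x ≠ l) := by
  obtain ⟨A, t, h1, h2, h3, h4⟩ := sorted_split (List.pairwise_lt_finRange n)
    (List.mem_finRange k)
  have hl : l ∈ t := by
    have : l ∈ List.finRange n := List.mem_finRange l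
    rw [h1, List.mem_append, List.mem_cons] at this
    rcases this with h | h | h
    · exact absurd (h2 l h) (lt_asymm hkl)
    · exact absurd h.symm (ne_of_lt hkl)
    · exact h
  obtain ⟨B, C, h5, h6, h7, _⟩ := sorted_split h4 hl
  refine ⟨A, B, C, by rw [h1, h5], ?_, ?_, ?_⟩
  · exact fun x hx => ⟨ne_of_lt (h2 x hx), ne_of_lt (lt_trans (h2 x hx) hkl)⟩
  · refine fun x hx => ⟨ne_of_gt (h3 x (h5 ▸ List.mem_append_left _ hx)), ne_of_lt (h6 x hx)⟩
  · refine fun x hx => ⟨ne_of_gt (h3 x (h5 ▸ ?_)), ne_of_gt (h7 x hx)⟩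
    exact List.mem_append_right _ (List.mem_cons_of_mem _ hx)

/-- absorbing a generator into its own column. -/
lemma absorb (k l : Fin n) (hkl : (k, l) ∈ ltSet n) (b : R) (f : Fin n → Fin n → R) :
    X k l hkl b * colL f l (List.finRange n) =
      colL (fun i j => if i = k ∧ j = l then b + f i j else f i j) l (List.finRange n) := by
  obtain ⟨L₁, L₂, hsplit, h1, h2⟩ := split_one k
  set g : Fin n → Fin n → R := fun i j => if i = k ∧ j = l then b + f i j else f i j with hg
  have hc : Commute (X k l hkl b) (colL f l L₁) := by
    refine commute_colL fun i hi hil => ?_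
    exact rel2 hkl hil (ne_of_gt (lt_trans (h1 i hi) (show k < l from hkl)))
      (ne_of_lt (show k < l from hkl)) b (f i l)
  have e1 : colL f l L₁ = colL g l L₁ :=
    colL_congr fun i hi _ => by simp [hg, ne_of_lt (h1 i hi)]
  have e2 : colL f l L₂ = colL g l L₂ :=
    colL_congr fun i hi _ => by simp [hg, ne_of_gt (h2 i hi)]
  rw [hsplit, colL_append, colL_cons, colL_append, colL_cons, ← mul_assoc, hc.eq,
    dif_pos (show k < l from hkl), dif_pos (show k < l from hkl),
    mul_assoc (colL f l L₁), ← mul_assoc (X k l hkl b), rel1, e1, e2]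
  have hgk : g k l = b + f k l := by simp [hg]
  rw [hgk]

/-- passing a generator `x_{kl}(b)` through a column `j` with `l < j`. -/
lemma pass (k l j : Fin n) (hkl : (k, l) ∈ ltSet n) (hlj : l < j) (b : R)
    (f : Fin n → Fin n → R) :
    X k l hkl b * colL f j (List.finRange n) =
      colL (fun i j' => if i = k ∧ j' = j then f i j' + b * f l j' else f i j') j
        (List.finRange n) * X k l hkl b := by
  have hkl' : k < l := hkl
  have hkj : k < j := lt_trans hkl' hlj
  obtain ⟨A, B, C, hsplit, hA, hB, hC⟩ := split_two hkl'
  set g : Fin n → Fin n → R :=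
    fun i j' => if i = k ∧ j' = j then f i j' + b * f l j' else f i j' with hg
  set x := X k l hkl b with hx
  -- x commutes with every column-j generator in row i ≠ l
  have hcomm : ∀ (i : Fin n), i ≠ l → ∀ (hij : (i, j) ∈ ltSet n) (a : R),
      Commute x (X i j hij a) := fun i hi hij a =>
    rel2 hkl hij (Ne.symm hi) (ne_of_lt hkj) b a
  have hcA : Commute x (colL f j A) :=
    commute_colL fun i hi hij => hcomm i (hA i hi).2 hij _
  have hcB : Commute x (colL f j B) :=
    commute_colL fun i hi hij => hcomm i (hB i hi).2 hij _
  have hcC : Commute x (colL f j C) :=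
    commute_colL fun i hi hij => hcomm i (hC i hi).2 hij _
  have hcu : Commute x (X k j hkj (f k j)) :=
    hcomm k (ne_of_lt hkl') hkj _
  -- the key commutator step
  have hkey : x * X l j hlj (f l j) =
      X k j hkj (b * f l j) * (X l j hlj (f l j) * x) := by
    have := rel3 (i := k) (j := l) (l := j) hkl hlj hkj b (f l j)
    rw [commutatorElement_def] at this
    calc x * X l j hlj (f l j)
        = (x * X l j hlj (f l j) * x⁻¹ * (X l j hlj (f l j))⁻¹) *
            (X l j hlj (f l j) * x) := by group
      _ = X k j hkj (b * f l j) * (X l j hlj (f l j) * x) := by rw [this]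
  -- the new head of column j commutes with cB
  have hwB : Commute (X k j hkj (b * f l j)) (colL f j B) := by
    refine commute_colL fun i hi hij => ?_
    exact rel2 hkj hij (ne_of_gt (show i < j from hij)) (ne_of_lt hkj) _ _
  -- congruence for the unchanged pieces
  have eA : colL f j A = colL g j A :=
    colL_congr fun i hi _ => by simp [hg, (hA i hi).1]
  have eB : colL f j B = colL g j B :=
    colL_congr fun i hi _ => by simp [hg, (hB i hi).1]
  have eC : colL f j C = colL g j C :=
    colL_congr fun i hi _ => by simp [hg, (hC i hi).1]
  have egl : g l j = f l j := by simp [hg, ne_of_gt hkl']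
  have egk : g k j = f k j + b * f l j := by simp [hg]
  rw [hsplit]
  calc x * colL f j (A ++ k :: (B ++ l :: C))
      = x * (colL f j A * (X k j hkj (f k j) *
        (colL f j B * (X l j hlj (f l j) * colL f j C)))) := by
        rw [colL_append, colL_cons, colL_append, colL_cons, dif_pos hkj, dif_pos hlj]
        try simp only [mul_assoc]
    _ = colL f j A * (X k j hkj (f k j) *
        (colL f j B * ((x * X l j hlj (f l j)) * colL f j C))) := by
        rw [← mul_assoc x, hcA.eq, mul_assoc, ← mul_assoc x, hcu.eq, mul_assoc,
          ← mul_assoc x, hcB.eq, mul_assoc, ← mul_assoc x]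
    _ = colL f j A * (X k j hkj (f k j) *
        (colL f j B * (X k j hkj (b * f l j) * (X l j hlj (f l j) * (colL f j C * x))))) := by
        rw [hkey]
        simp only [mul_assoc, hcC.eq]
    _ = colL f j A * ((X k j hkj (f k j) * X k j hkj (b * f l j)) *
        (colL f j B * (X l j hlj (f l j) * (colL f j C * x)))) := by
        rw [← mul_assoc (colL f j B), ← hwB.eq]
        simp only [mul_assoc]
    _ = colL g j A * (X k j hkj (g k j) *
        (colL g j B * (X l j hlj (g l j) * (colL g j C * x)))) := by
        rw [rel1 k j hkj, eA, eB, eC, egl, egk]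
    _ = colL g j (A ++ k :: (B ++ l :: C)) * x := by
        rw [colL_append, colL_cons, colL_append, colL_cons, dif_pos hkj, dif_pos hlj]
        simp only [mul_assoc]

/-- product of the columns listed in `Ls` (each a full column product). -/
def NFL (f : Fin n → Fin n → R) (Ls : List (Fin n)) : SteinbergUpper n R :=
  (Ls.map fun j => colL f j (List.finRange n)).prod

lemma NFL_nil (f : Fin n → Fin n → R) : NFL f [] = 1 := rfl

lemma NFL_cons (f : Fin n → Fin n → R) (j : Fin n) (Ls : List (Fin n)) :
    NFL f (j :: Ls) = colL f j (List.finRange n) * NFL f Ls := by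
  simp [NFL]

lemma NFL_congr {f g : Fin n → Fin n → R} {Ls : List (Fin n)}
    (h : ∀ j ∈ Ls, ∀ i, i < j → f i j = g i j) : NFL f Ls = NFL g Ls := by
  induction Ls with
  | nil => rfl
  | cons j Ls ih =>
    rw [NFL_cons, NFL_cons, ih (fun j hj => h j (List.mem_cons_of_mem _ hj)),
      colL_congr (fun i _ hi => h j (List.mem_cons_self) i hi)]

lemma NFL_zero (Ls : List (Fin n)) : NFL (fun _ _ => (0 : R)) Ls = 1 := by
  induction Ls with
  | nil => rfl
  | cons j Ls ih => rw [NFL_cons, ih, colL_zero, one_mul]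

/-- the effect of left multiplication by `x_{kl}(b)` on normal-form coordinates. -/
def pushF (f : Fin n → Fin n → R) (k l : Fin n) (b : R) : Fin n → Fin n → R :=
  fun i j => if i = k ∧ j = l then b + f i j
    else if i = k ∧ l < j then f i j + b * f l j else f i j

lemma push_NFL (k l : Fin n) (hkl : (k, l) ∈ ltSet n) (b : R) (f : Fin n → Fin n → R) :
    ∀ Ls : List (Fin n), Ls.Pairwise (· > ·) → l ∈ Ls →
      X k l hkl b * NFL f Ls = NFL (pushF f k l b) Ls := by
  intro Ls
  induction Ls with
  | nil => intro _ h; simp at h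
  | cons j Ls ih =>
    intro hp hl
    rw [List.pairwise_cons] at hp
    rw [NFL_cons, NFL_cons]
    by_cases hjl : j = l
    · subst hjl
      rw [← mul_assoc, absorb k j hkl b f]
      congr 1
      · refine colL_congr fun i _ hij => ?_
        simp only [pushF]
        by_cases hik : i = k
        · simp [hik]
        · simp [hik]
      · refine NFL_congr fun j' hj' i hij' => ?_
        have hj'j : j' < j := hp.1 j' hj'
        simp only [pushF]
        rw [if_neg, if_neg]
        · exact fun h => absurd h.2 (not_lt_of_gt hj'j)
        · exact fun h => absurd h.2 (ne_of_lt hj'j)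
    · have hlLs : l ∈ Ls := by
        rcases List.mem_cons.mp hl with h | h
        · exact absurd h.symm hjl
        · exact h
      have hlj : l < j := hp.1 l hlLs
      rw [← mul_assoc, pass k l j hkl hlj b f, mul_assoc, ih hp.2 hlLs]
      congr 1
      refine colL_congr fun i _ hij => ?_
      by_cases hik : i = k
      · simp [pushF, hik, hjl, hlj]
      · simp [pushF, hik]

/-- the normal form. -/
def NF (f : Fin n → Fin n → R) : SteinbergUpper n R := NFL f (List.finRange n).reverse

lemma rev_pairwise_gt : ((List.finRange n).reverse).Pairwise (· > ·) :=
  List.pairwise_reverse.mpr (List.pairwise_lt_finRange n)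

lemma NF_zero : NF (n := n) (fun _ _ => (0 : R)) = 1 := NFL_zero _

lemma X_mul_NF (k l : Fin n) (hkl : (k, l) ∈ ltSet n) (b : R) (f : Fin n → Fin n → R) :
    X k l hkl b * NF f = NF (pushF f k l b) :=
  push_NFL k l hkl b f _ rev_pairwise_gt (by simp)

lemma NF_congr {f g : Fin n → Fin n → R} (h : ∀ i j, i < j → f i j = g i j) :
    NF f = NF g :=
  NFL_congr fun j _ i hij => h i j hij

/-- every element of the Steinberg group is a normal form. -/
lemma exists_NF (g : SteinbergUpper n R) : ∃ f : Fin n → Fin n → R, g = NF f := by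
  let K : Subgroup (SteinbergUpper n R) :=
    { carrier := {g | (∀ f, ∃ f', g * NF f = NF f') ∧ (∀ f, ∃ f', g⁻¹ * NF f = NF f')}
      one_mem' := ⟨fun f => ⟨f, by rw [one_mul]⟩, fun f => ⟨f, by rw [inv_one, one_mul]⟩⟩
      mul_mem' := by
        rintro a b ⟨ha1, ha2⟩ ⟨hb1, hb2⟩
        constructor
        · intro f
          obtain ⟨f1, h1⟩ := hb1 f
          obtain ⟨f2, h2⟩ := ha1 f1
          exact ⟨f2, by rw [mul_assoc, h1, h2]⟩
        · intro f
          obtain ⟨f1, h1⟩ := ha2 f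
          obtain ⟨f2, h2⟩ := hb2 f1
          exact ⟨f2, by rw [mul_inv_rev, mul_assoc, h1, h2]⟩
      inv_mem' := by
        rintro a ⟨ha1, ha2⟩
        exact ⟨ha2, fun f => by rw [inv_inv]; exact ha1 f⟩ }
  have hK : ∀ x, x ∈ K := by
    refine fun x => PresentedGroup.generated_by _ K ?_ x
    rintro ⟨⟨⟨k, l⟩, hkl⟩, r⟩
    constructor
    · exact fun f => ⟨pushF f k l r, X_mul_NF k l hkl r f⟩
    · intro f
      refine ⟨pushF f k l (-r), ?_⟩
      have : (PresentedGroup.of (⟨(k, l), hkl⟩, r) : SteinbergUpper n R)⁻¹ =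
          X k l hkl (-r) := X_inv k l hkl r
      rw [this, X_mul_NF]
  obtain ⟨f', hf'⟩ := (hK g).1 (fun _ _ => (0 : R))
  rw [NF_zero, mul_one] at hf'
  exact ⟨f', hf'⟩

end NormalForm

section MatrixNF

open Matrix

lemma phi_colL (f : Fin n → Fin n → R) (j : Fin n) :
    ∀ L : List (Fin n), L.Nodup →
      (phi (colL f j L)).val =
        1 + Matrix.of (fun a b => if b = j ∧ a ∈ L ∧ a < j then f a b else 0) := by
  intro L
  induction L with
  | nil =>
    intro _
    rw [colL_nil, _root_.map_one, Units.val_one]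
    ext a b
    simp [Matrix.one_apply]
  | cons i L ih =>
    intro hnd
    rw [List.nodup_cons] at hnd
    rw [colL_cons]
    by_cases hij : i < j
    · rw [dif_pos hij, _root_.map_mul, Units.val_mul, ih hnd.2, phi_X i j hij]
      have hEQ : single i j (f i j) *
          Matrix.of (fun a b => if b = j ∧ a ∈ L ∧ a < j then f a b else 0) = 0 := by
        ext a b
        by_cases ha : a = i
        · subst ha
          rw [single_mul_apply_same]
          simp [lt_irrefl]
        · rw [single_mul_apply_of_ne _ _ _ _ _ ha]
          simp
      show elemMat i j (f i j) * _ = _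
      rw [elemMat, add_mul, one_mul, mul_add, mul_one, hEQ, add_zero]
      ext a b
      by_cases ha : a = i
      · subst ha
        by_cases hb : b = j
        · subst hb
          simp [single, Matrix.one_apply, hnd.1, hij, ne_of_lt hij]
        · simp only [Matrix.add_apply, Matrix.of_apply, single, Matrix.one_apply]
          simp [hb]
          exact fun h => absurd h.symm hb
      · simp [single, Matrix.one_apply, Ne.symm ha, ha]
    · rw [dif_neg hij, one_mul, ih hnd.2]
      ext a b
      by_cases ha : a = i
      · subst ha
        simp [hij]
      · simp [ha]

lemma phi_NFL (f : Fin n → Fin n → R) :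
    ∀ Ls : List (Fin n), Ls.Pairwise (· > ·) →
      (phi (NFL f Ls)).val = 1 + Matrix.of (fun a b => if b ∈ Ls ∧ a < b then f a b else 0) := by
  intro Ls
  induction Ls with
  | nil =>
    intro _
    rw [NFL_nil, _root_.map_one, Units.val_one]
    ext a b
    simp
  | cons j Ls ih =>
    intro hp
    rw [List.pairwise_cons] at hp
    have hjLs : j ∉ Ls := fun h => lt_irrefl j (hp.1 j h)
    rw [NFL_cons, _root_.map_mul, Units.val_mul, phi_colL f j _ (List.nodup_finRange n), ih hp.2]
    set C : Matrix (Fin n) (Fin n) R :=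
      Matrix.of (fun a b => if b = j ∧ a ∈ List.finRange n ∧ a < j then f a b else 0) with hC
    set Q : Matrix (Fin n) (Fin n) R :=
      Matrix.of (fun a b => if b ∈ Ls ∧ a < b then f a b else 0) with hQ
    have hCQ : C * Q = 0 := by
      ext a b
      rw [Matrix.mul_apply, Matrix.zero_apply]
      refine Finset.sum_eq_zero fun c _ => ?_
      by_cases hc : c = j
      · have hQjb : Q j b = 0 := by
          by_cases hb : b ∈ Ls
          · have hnb : ¬ j < b := fun h => lt_asymm h (hp.1 b hb)
            simp [hQ, hnb]
          · simp [hQ, hb]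
        rw [hc, hQjb, mul_zero]
      · have : C a c = 0 := by simp [hC, hc]
        rw [this, zero_mul]
    rw [add_mul, one_mul, mul_add, mul_one, hCQ, add_zero]
    ext a b
    by_cases hb : b = j
    · subst hb
      simp [hC, hQ, hjLs]
    · simp [hC, hQ, hb]

lemma phi_NF_apply (f : Fin n → Fin n → R) (a b : Fin n) :
    (phi (NF f)).val a b = if a = b then 1 else if a < b then f a b else 0 := by
  rw [NF, phi_NFL f _ rev_pairwise_gt]
  rcases lt_trichotomy a b with h | h | h
  · simp [Matrix.one_apply, h, ne_of_lt h]
  · subst h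
    simp [Matrix.one_apply, lt_irrefl]
  · simp [Matrix.one_apply, not_lt_of_gt h, ne_of_gt h]

end MatrixNF

end SteinbergAux



open SteinbergAux in
/-- the homomorphism `St_n(R)_{α₀} → GL_n(R)` sending each generator `x_{ij}(r)`
(`i < j`) to the elementary matrix `ε_{ij}(r)` is injective with image the group `T_n(R)` of
upper unitriangular matrices; hence `St_n(R)_{α₀} ≅ T_n(R)`. -/
theorem steinbergUpper_iso_unitriangular (n : ℕ) (R : Type*) [Ring R] :
    ∃ φ : SteinbergUpper n R →* (Matrix (Fin n) (Fin n) R)ˣ,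
      (∀ (p : {p : Fin n × Fin n // p ∈ ltSet n}) (r : R),
          φ (PresentedGroup.of (p, r)) = elemUnit p.1.1 p.1.2 (ne_of_lt p.2) r) ∧
      Function.Injective φ ∧
      (φ.range : Set (Matrix (Fin n) (Fin n) R)ˣ) =
        {M | (∀ k, M.val k k = 1) ∧ ∀ k l : Fin n, l < k → M.val k l = 0} := by
  refine ⟨phi, ?_, ?_, ?_⟩
  · rintro ⟨⟨i, j⟩, hij⟩ r
    exact phi_X i j hij r
  · intro g h hgh
    obtain ⟨f, rfl⟩ := exists_NF g
    obtain ⟨f', rfl⟩ := exists_NF h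
    refine NF_congr fun i j hij => ?_
    have := congrArg (fun M : (Matrix (Fin n) (Fin n) R)ˣ => M.val i j) hgh
    rw [phi_NF_apply, phi_NF_apply] at this
    simpa [ne_of_lt hij, hij] using this
  · ext M
    simp only [SetLike.mem_coe, MonoidHom.mem_range, Set.mem_setOf_eq]
    constructor
    · rintro ⟨g, rfl⟩
      obtain ⟨f, rfl⟩ := exists_NF g
      constructor
      · intro k
        rw [phi_NF_apply]
        simp
      · intro k l hlk
        rw [phi_NF_apply, if_neg (ne_of_gt hlk), if_neg (not_lt_of_gt hlk)]
    · rintro ⟨hdiag, hlow⟩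
      refine ⟨NF (fun i j => M.val i j), Units.ext ?_⟩
      ext a b
      rw [phi_NF_apply]
      rcases lt_trichotomy a b with h | h | h
      · rw [if_neg (ne_of_lt h), if_pos h]
      · subst h
        rw [if_pos rfl, hdiag a]
      · rw [if_neg (ne_of_gt h), if_neg (not_lt_of_gt h), hlow a b h]
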